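/- arXiv:1808.09903 — 3 statements merged into one kernel-verified Lean document; each statement's English description precedes it below -/
import Mathlib

section
/- Let (X,d) be a finite metric space with |X| > 1 and let S, T : X → X satisfy d(S(x),S(y)) < d(T(x),T(y)) for all x ≠ y. Then T is a bijection and S is neither injective nor surjective. -/
theorem dominating_map_finite {X : Type*} [MetricSpace X] [Fintype X] [Nontrivial X]
    (S T : X → X)
    (h : ∀ x y : X, x ≠ y → dist (S x) (S y) < dist (T x) (T y)) :
    Function.Bijective T ∧ ¬Function.Injective S ∧ ¬Function.Surjective S := by
  have hTinj : Function.Injective T := by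
    intro x y hxy
    by_contra hne
    have := h x y hne
    rw [hxy, dist_self] at this
    exact absurd this (not_lt.2 dist_nonneg)
  have hSnotinj : ¬Function.Injective S := by
    intro hS
    have hSsurj : Function.Surjective S := Finite.surjective_of_injective hS
    obtain ⟨⟨a, b⟩, hab⟩ := Finite.exists_max (fun p : X × X => dist p.1 p.2)
    obtain ⟨u, v, huv⟩ := exists_pair_ne X
    have hpos : 0 < dist a b := lt_of_lt_of_le (dist_pos.2 huv) (hab (u, v))
    obtain ⟨x, hx⟩ := hSsurj a
    obtain ⟨y, hy⟩ := hSsurj b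
    have hxy : x ≠ y := fun e => (dist_pos.1 hpos) (by rw [← hx, ← hy, e])
    have h1 := h x y hxy
    rw [hx, hy] at h1
    exact absurd (hab (T x, T y)) (not_le.2 h1)
  exact ⟨⟨hTinj, Finite.surjective_of_injective hTinj⟩, hSnotinj,
    fun hs => hSnotinj (Finite.injective_iff_surjective.mpr hs)⟩
end

section
/- Let S, T : ℤ → ℤ with d(x,y) = |x-y|, and suppose d(S(x),S(y)) < d(T(x),T(y)) for all x ≠ y. If T satisfies |T(x)-T(x')| ≤ 1 whenever |x-x'| = 1 (i.e., T is digitally continuous for c₁-adjacency), then S is a constant function. -/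
theorem dominated_by_digitally_continuous_is_constant (S T : ℤ → ℤ)
    (h : ∀ x y : ℤ, x ≠ y → |S x - S y| < |T x - T y|)
    (hT : ∀ x x' : ℤ, |x - x'| = 1 → |T x - T x'| ≤ 1) :
    ∃ c : ℤ, ∀ x : ℤ, S x = c := by
  have step : ∀ x x' : ℤ, |x - x'| = 1 → S x = S x' := by
    intro x x' hxx
    have hne : x ≠ x' := by
      intro he; rw [he] at hxx; simp at hxx
    have h1 : |S x - S x'| < |T x - T x'| := h x x' hne
    have h2 := hT x x' hxx
    have : |S x - S x'| < 1 := lt_of_lt_of_le h1 h2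
    have : |S x - S x'| ≤ 0 := by omega
    have := abs_nonneg (S x - S x')
    have : |S x - S x'| = 0 := by omega
    have := abs_eq_zero.mp this
    omega
  refine ⟨S 0, fun x => ?_⟩
  induction x using Int.induction_on with
  | zero => rfl
  | succ n ih =>
    have := step (n + 1) n (by simp)
    omega
  | pred n ih =>
    have := step (-n - 1) (-n) (by rw [show (-n - 1 : ℤ) - (-n) = -1 by ring]; simp)
    omega
end

section
/- Let (X,d) be a finite metric space and T : X → X. If there exists an increasing φ : [0,∞) → [0,∞) with φ(0) = 0 and φ(t) < t for t > 0 such that φ(d(T(x),T(y))) < φ(d(x,y)) for all x ≠ y, then there exists α ∈ (0,1) such that d(T(x),T(y)) ≤ α·d(x,y) for all x,y ∈ X. -/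
theorem phi_contractive_is_contraction {X : Type*} [MetricSpace X] [Fintype X]
    (T : X → X) (φ : ℝ → ℝ)
    (hφmono : StrictMonoOn φ (Set.Ici 0))
    (hφ0 : φ 0 = 0) (hφlt : ∀ t : ℝ, 0 < t → φ t < t)
    (hcontr : ∀ x y : X, x ≠ y → φ (dist (T x) (T y)) < φ (dist x y)) :
    ∃ α : ℝ, 0 < α ∧ α < 1 ∧ ∀ x y : X, dist (T x) (T y) ≤ α * dist x y := by
  have hlt : ∀ x y : X, x ≠ y → dist (T x) (T y) < dist x y := by
    intro x y hxy
    by_contra h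
    push_neg at h
    exact absurd (hcontr x y hxy)
      (not_lt.2 (hφmono.monotoneOn dist_nonneg dist_nonneg h))
  classical
  set s : Finset (X × X) := Finset.univ.filter (fun p : X × X => p.1 ≠ p.2) with hs
  by_cases hne : s.Nonempty
  · set M := s.sup' hne (fun p => dist (T p.1) (T p.2) / dist p.1 p.2) with hM
    refine ⟨max M (1/2), lt_of_lt_of_le (by norm_num) (le_max_right _ _), ?_, ?_⟩
    · apply max_lt _ (by norm_num)
      apply (Finset.sup'_lt_iff hne).2
      intro p hp
      have hpne : p.1 ≠ p.2 := (Finset.mem_filter.1 hp).2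
      have hd : 0 < dist p.1 p.2 := dist_pos.2 hpne
      exact (div_lt_one hd).2 (hlt p.1 p.2 hpne)
    · intro x y
      by_cases hxy : x = y
      · simp [hxy]
      · have hd : 0 < dist x y := dist_pos.2 hxy
        have hmem : (x, y) ∈ s := Finset.mem_filter.2 ⟨Finset.mem_univ _, hxy⟩
        have hratio : dist (T x) (T y) / dist x y ≤ M :=
          Finset.le_sup' (f := fun p => dist (T p.1) (T p.2) / dist p.1 p.2) hmem
        calc dist (T x) (T y) = (dist (T x) (T y) / dist x y) * dist x y := by
              field_simp
          _ ≤ max M (1/2) * dist x y := by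
              apply mul_le_mul_of_nonneg_right _ dist_nonneg
              exact le_trans hratio (le_max_left _ _)
  · refine ⟨1/2, by norm_num, by norm_num, ?_⟩
    intro x y
    have hxy : x = y := by
      by_contra h
      exact hne ⟨(x, y), Finset.mem_filter.2 ⟨Finset.mem_univ _, h⟩⟩
    simp [hxy]
end
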